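/- Let (θ_A^♯, θ_B^♯, θ_S^♯) and (θ_A^♭, θ_B^♭, θ_S^♭) be two classical decaying solutions of the three-phase heat system on (0,T) with the same constants κ_A, κ_B, κ_S, α_S > 0. Assume in addition that each solution is continuous on {x₃ ≥ 0} × [0,T), {x₃ ≤ 0} × [0,T), ℝ² × [0,T) respectively, that the decay bounds hold with a function M continuous on [0,T), and that the two solutions agree at t = 0: θ_A^♯(x,0) = θ_A^♭(x,0) for all x with x₃ ≥ 0, θ_B^♯(x,0) = θ_B^♭(x,0) for all x with x₃ ≤ 0, and θ_S^♯(x_h,0) = θ_S^♭(x_h,0) for all x_h ∈ ℝ². Then θ_A^♯ = θ_A^♭ on {x₃ ≥ 0} × [0,T), θ_B^♯ = θ_B^♭ on {x₃ ≤ 0} × [0,T), and θ_S^♯ = θ_S^♭ on ℝ² × [0,T). -/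

import Mathlib

open MeasureTheory Set

noncomputable section

/- We realize `ℝ³` as `(ℝ × ℝ) × ℝ`, writing a point `x` as `(x_h, x₃)` with
horizontal part `x_h = x.1 ∈ ℝ × ℝ` and vertical coordinate `x₃ = x.2`. -/

/-- The standard basis directions of `ℝ³ = (ℝ × ℝ) × ℝ`. -/
def e1 : (ℝ × ℝ) × ℝ := ((1, 0), 0)
def e2 : (ℝ × ℝ) × ℝ := ((0, 1), 0)
def e3 : (ℝ × ℝ) × ℝ := ((0, 0), 1)

/-- Open upper half space `ℝ³₊ = {x : x₃ > 0}`. -/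
def upperHalf : Set ((ℝ × ℝ) × ℝ) := {x | 0 < x.2}
/-- Open lower half space `ℝ³₋ = {x : x₃ < 0}`. -/
def lowerHalf : Set ((ℝ × ℝ) × ℝ) := {x | x.2 < 0}
/-- Closed upper half space `{x : x₃ ≥ 0}`. -/
def UA : Set ((ℝ × ℝ) × ℝ) := {x | 0 ≤ x.2}
/-- Closed lower half space `{x : x₃ ≤ 0}`. -/
def UB : Set ((ℝ × ℝ) × ℝ) := {x | x.2 ≤ 0}

/-- Partial derivative within a set `s` (one-sided up to the boundary), in direction `v`. -/
noncomputable def pdW (s : Set ((ℝ × ℝ) × ℝ)) (v : (ℝ × ℝ) × ℝ)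
    (f : (ℝ × ℝ) × ℝ → ℝ) (x : (ℝ × ℝ) × ℝ) : ℝ :=
  fderivWithin ℝ f s x v

/-- Laplacian `Δf` computed with derivatives within `s`. -/
noncomputable def lapW (s : Set ((ℝ × ℝ) × ℝ)) (f : (ℝ × ℝ) × ℝ → ℝ)
    (x : (ℝ × ℝ) × ℝ) : ℝ :=
  pdW s e1 (pdW s e1 f) x + pdW s e2 (pdW s e2 f) x + pdW s e3 (pdW s e3 f) x

/-- `|∇f|²` computed with derivatives within `s`. -/
noncomputable def gradSqW (s : Set ((ℝ × ℝ) × ℝ)) (f : (ℝ × ℝ) × ℝ → ℝ)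
    (x : (ℝ × ℝ) × ℝ) : ℝ :=
  (pdW s e1 f x) ^ 2 + (pdW s e2 f x) ^ 2 + (pdW s e3 f x) ^ 2

/-- Horizontal partial derivative on `ℝ²` in direction `v`. -/
noncomputable def pdH (v : ℝ × ℝ) (f : ℝ × ℝ → ℝ) (x : ℝ × ℝ) : ℝ := fderiv ℝ f x v

/-- Horizontal Laplacian `Δ_h f = ∂₁²f + ∂₂²f` on `ℝ²`. -/
noncomputable def lapH (f : ℝ × ℝ → ℝ) (x : ℝ × ℝ) : ℝ :=
  pdH (1, 0) (pdH (1, 0) f) x + pdH (0, 1) (pdH (0, 1) f) x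

/-- `|∇_h f|²` on `ℝ²`. -/
noncomputable def gradSqH (f : ℝ × ℝ → ℝ) (x : ℝ × ℝ) : ℝ :=
  (pdH (1, 0) f x) ^ 2 + (pdH (0, 1) f x) ^ 2

/-- A classical decaying solution of the three-phase heat system on `(0,T)` with constants
`κ_A, κ_B, κ_S, α_S`: regularity up to the interface, the three heat equations, the interface
conditions, and the polynomial decay bounds with a continuous function `M` on `(0,T)`. -/
structure ClassicalDecayingSolution (T κA κB κS αS : ℝ)
    (θA θB : (ℝ × ℝ) × ℝ → ℝ → ℝ) (θS : ℝ × ℝ → ℝ → ℝ) : Prop where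
  contA : ContinuousOn (fun p : ((ℝ × ℝ) × ℝ) × ℝ => θA p.1 p.2) (UA ×ˢ Ioo 0 T)
  contB : ContinuousOn (fun p : ((ℝ × ℝ) × ℝ) × ℝ => θB p.1 p.2) (UB ×ˢ Ioo 0 T)
  contS : ContinuousOn (fun p : (ℝ × ℝ) × ℝ => θS p.1 p.2) (univ ×ˢ Ioo 0 T)
  spaceA : ∀ t ∈ Ioo (0 : ℝ) T, ContDiffOn ℝ 2 (fun x => θA x t) UA
  spaceB : ∀ t ∈ Ioo (0 : ℝ) T, ContDiffOn ℝ 2 (fun x => θB x t) UB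
  spaceS : ∀ t ∈ Ioo (0 : ℝ) T, ContDiff ℝ 2 (fun xh => θS xh t)
  timeA : ∀ x ∈ UA, ∀ t ∈ Ioo (0 : ℝ) T, DifferentiableAt ℝ (θA x) t
  timeB : ∀ x ∈ UB, ∀ t ∈ Ioo (0 : ℝ) T, DifferentiableAt ℝ (θB x) t
  timeS : ∀ xh : ℝ × ℝ, ∀ t ∈ Ioo (0 : ℝ) T, DifferentiableAt ℝ (θS xh) t
  timeDerivContA : ContinuousOn (fun p : ((ℝ × ℝ) × ℝ) × ℝ => deriv (θA p.1) p.2)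
    (UA ×ˢ Ioo 0 T)
  timeDerivContB : ContinuousOn (fun p : ((ℝ × ℝ) × ℝ) × ℝ => deriv (θB p.1) p.2)
    (UB ×ˢ Ioo 0 T)
  timeDerivContS : ContinuousOn (fun p : (ℝ × ℝ) × ℝ => deriv (θS p.1) p.2)
    (univ ×ˢ Ioo 0 T)
  pdeA : ∀ x : (ℝ × ℝ) × ℝ, 0 < x.2 → ∀ t ∈ Ioo (0 : ℝ) T,
    deriv (θA x) t = κA * lapW UA (fun y => θA y t) x
  pdeB : ∀ x : (ℝ × ℝ) × ℝ, x.2 < 0 → ∀ t ∈ Ioo (0 : ℝ) T,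
    deriv (θB x) t = κB * lapW UB (fun y => θB y t) x
  pdeS : ∀ xh : ℝ × ℝ, ∀ t ∈ Ioo (0 : ℝ) T,
    αS * deriv (θS xh) t = κS * lapH (fun y => θS y t) xh
      + κA * pdW UA e3 (fun y => θA y t) (xh, 0)
      - κB * pdW UB e3 (fun y => θB y t) (xh, 0)
  interfaceA : ∀ xh : ℝ × ℝ, ∀ t ∈ Ioo (0 : ℝ) T, θA (xh, 0) t = θS xh t
  interfaceB : ∀ xh : ℝ × ℝ, ∀ t ∈ Ioo (0 : ℝ) T, θB (xh, 0) t = θS xh t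
  decay : ∃ M : ℝ → ℝ, ContinuousOn M (Ioo 0 T) ∧
    (∀ x ∈ UA, ∀ t ∈ Ioo (0 : ℝ) T,
      |θA x t| + |deriv (θA x) t| + ‖fderivWithin ℝ (fun y => θA y t) UA x‖
        + ‖fderivWithin ℝ (fderivWithin ℝ (fun y => θA y t) UA) UA x‖
        ≤ M t / (1 + ‖x‖) ^ 4) ∧
    (∀ x ∈ UB, ∀ t ∈ Ioo (0 : ℝ) T,
      |θB x t| + |deriv (θB x) t| + ‖fderivWithin ℝ (fun y => θB y t) UB x‖
        + ‖fderivWithin ℝ (fderivWithin ℝ (fun y => θB y t) UB) UB x‖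
        ≤ M t / (1 + ‖x‖) ^ 4) ∧
    (∀ xh : ℝ × ℝ, ∀ t ∈ Ioo (0 : ℝ) T,
      |θS xh t| + |deriv (θS xh) t| + ‖fderiv ℝ (fun y => θS y t) xh‖
        + ‖fderiv ℝ (fderiv ℝ (fun y => θS y t)) xh‖ ≤ M t / (1 + ‖xh‖) ^ 4)

/-- The total heat energy
`E(t) = ∫_{ℝ³₊} θ_A² dx + ∫_{ℝ³₋} θ_B² dx + α_S ∫_{ℝ²} θ_S² dx_h`. -/
noncomputable def energy (αS : ℝ) (θA θB : (ℝ × ℝ) × ℝ → ℝ → ℝ) (θS : ℝ × ℝ → ℝ → ℝ)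
    (t : ℝ) : ℝ :=
  (∫ x in upperHalf, (θA x t) ^ 2) + (∫ x in lowerHalf, (θB x t) ^ 2)
    + αS * ∫ xh : ℝ × ℝ, (θS xh t) ^ 2



section B12
open Filter Topology
lemma deriv_nonneg_of_isMaxOn_left {f : ℝ → ℝ} {s : Set ℝ} {b d : ℝ}
    (hmax : IsMaxOn f s b) (hd : HasDerivWithinAt f d s b)
    (hne : (𝓝[s \ {b}] b).NeBot) (hle : ∀ x ∈ s, x ≤ b) : 0 ≤ d := by
  haveI := hne
  have h := hasDerivWithinAt_iff_tendsto_slope.mp hd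
  refine ge_of_tendsto h ?_
  filter_upwards [self_mem_nhdsWithin] with x hx
  rcases hx with ⟨hxs, hxb⟩
  have hx_lt : x < b := lt_of_le_of_ne (hle x hxs) (by simpa using hxb)
  have hfx : f x ≤ f b := hmax hxs
  rw [slope_def_field]
  exact div_nonneg_of_nonpos (by simp at hfx ⊢; linarith) (by linarith)

lemma deriv_nonpos_of_isMaxOn_right {f : ℝ → ℝ} {s : Set ℝ} {b d : ℝ}
    (hmax : IsMaxOn f s b) (hd : HasDerivWithinAt f d s b)
    (hne : (𝓝[s \ {b}] b).NeBot) (hge : ∀ x ∈ s, b ≤ x) : d ≤ 0 := by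
  haveI := hne
  have h := hasDerivWithinAt_iff_tendsto_slope.mp hd
  refine le_of_tendsto h ?_
  filter_upwards [self_mem_nhdsWithin] with x hx
  rcases hx with ⟨hxs, hxb⟩
  have hx_gt : b < x := lt_of_le_of_ne (hge x hxs) (by simpa using (Ne.symm (by simpa using hxb)))
  have hfx : f x ≤ f b := hmax hxs
  rw [slope_def_field]
  apply div_nonpos_of_nonpos_of_nonneg
  · simp at hfx ⊢; linarith
  · linarith

lemma deriv2_nonpos_of_isLocalMax {φ : ℝ → ℝ} {c : ℝ}
    (hmax : IsLocalMax φ 0)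
    (hdiff : ∀ᶠ r in 𝓝 (0:ℝ), DifferentiableAt ℝ φ r)
    (hc : HasDerivAt (deriv φ) c 0) : c ≤ 0 := by
  by_contra hpos
  push_neg at hpos  -- 0 < c
  have h0 : deriv φ 0 = 0 := hmax.deriv_eq_zero
  have hslope : Tendsto (slope (deriv φ) 0) (𝓝[>] (0:ℝ)) (𝓝 c) :=
    (hasDerivAt_iff_tendsto_slope.mp hc).mono_left
      (nhdsWithin_mono _ fun x hx => ne_of_gt hx)
  have hev : ∀ᶠ r in 𝓝[>] (0:ℝ), 0 < deriv φ r := by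
    filter_upwards [hslope.eventually (lt_mem_nhds (half_lt_self hpos)), self_mem_nhdsWithin]
      with r hr hr'
    have hr'' : (0:ℝ) < r := hr'
    have hs : slope (deriv φ) 0 r = deriv φ r / r := by
      simp [slope_def_field, h0]
    rw [hs] at hr
    have h1 : 0 < deriv φ r / r := lt_trans (half_pos hpos) hr
    have h2 := mul_pos h1 hr''
    rwa [div_mul_cancel₀ _ (ne_of_gt hr'')] at h2
  obtain ⟨u, hu, hsub⟩ := mem_nhdsGT_iff_exists_Ioo_subset.mp hev
  obtain ⟨ε1, hε1, hball1⟩ := Metric.mem_nhds_iff.mp hdiff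
  obtain ⟨ε2, hε2, hball2⟩ := Metric.mem_nhds_iff.mp hmax
  set b := min (min (u/2) (ε1/2)) (ε2/2) with hbdef
  have hu' : (0:ℝ) < u := hu
  have hb : 0 < b := by positivity
  have hbu : b < u := lt_of_le_of_lt (le_trans (min_le_left _ _) (min_le_left _ _)) (by linarith)
  have hbe1 : b < ε1 := lt_of_le_of_lt (le_trans (min_le_left _ _) (min_le_right _ _)) (by linarith)
  have hbe2 : b < ε2 := lt_of_le_of_lt (min_le_right _ _) (by linarith)
  have hmono : StrictMonoOn φ (Icc 0 b) := by
    apply strictMonoOn_of_deriv_pos (convex_Icc 0 b)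
    · intro x hx
      have : x ∈ Metric.ball (0:ℝ) ε1 := by
        rw [Metric.mem_ball, Real.dist_eq, sub_zero, abs_of_nonneg hx.1]
        linarith [hx.2]
      exact (hball1 this).continuousAt.continuousWithinAt
    · intro x hx
      rw [interior_Icc] at hx
      exact hsub ⟨hx.1, lt_trans hx.2 hbu⟩
  have hlt : φ 0 < φ b := hmono (left_mem_Icc.mpr hb.le) (right_mem_Icc.mpr hb.le) hb
  have : φ b ≤ φ 0 := by
    apply hball2
    rw [Metric.mem_ball, Real.dist_eq, sub_zero, abs_of_nonneg hb.le]
    exact hbe2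
  linarith

lemma hessian_nonpos {E : Type*} [NormedAddCommGroup E] [NormedSpace ℝ E] {f : E → ℝ} {x v : E}
    (hf : ContDiffAt ℝ 2 f x) (hmax : IsLocalMax f x) :
    fderiv ℝ (fun y => fderiv ℝ f y v) x v ≤ 0 := by
  set L : ℝ → E := fun r => x + r • v with hLdef
  have hL : ∀ r : ℝ, HasDerivAt L v r := by
    intro r
    simpa [hLdef] using ((hasDerivAt_id r).smul_const v).const_add x
  have hLcont : Continuous L := by fun_prop
  have hLtend : Tendsto L (𝓝 0) (𝓝 x) := by
    have := hLcont.tendsto 0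
    simpa [hLdef] using this
  set φ : ℝ → ℝ := fun r => f (L r) with hφdef
  have hφ0 : L 0 = x := by simp [hLdef]
  have hmaxφ : IsLocalMax φ 0 := by
    have : ∀ᶠ r in 𝓝 (0:ℝ), f (L r) ≤ f x := hLtend.eventually hmax
    have hφ0' : φ 0 = f x := by simp [hφdef, hLdef]
    show ∀ᶠ r in 𝓝 (0:ℝ), φ r ≤ φ 0
    rw [hφ0']
    exact this
  have hev : ∀ᶠ y in 𝓝 x, DifferentiableAt ℝ f y :=
    (hf.eventually (by norm_num)).mono fun y hy => hy.differentiableAt two_ne_zero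
  have hφd : ∀ᶠ r in 𝓝 (0:ℝ), HasDerivAt φ (fderiv ℝ f (L r) v) r := by
    filter_upwards [hLtend.eventually hev] with r hr
    exact hr.hasFDerivAt.comp_hasDerivAt r (hL r)
  have hφdiff : ∀ᶠ r in 𝓝 (0:ℝ), DifferentiableAt ℝ φ r := hφd.mono fun r h => h.differentiableAt
  have hderiv_eq : deriv φ =ᶠ[𝓝 (0:ℝ)] fun r => fderiv ℝ f (L r) v := hφd.mono fun r h => h.deriv
  have h2 : DifferentiableAt ℝ (fderiv ℝ f) x :=
    ((hf.fderiv_right (by norm_num) : ContDiffAt ℝ 1 (fderiv ℝ f) x)).differentiableAt one_ne_zero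
  have hG : HasDerivAt (fun r => fderiv ℝ f (L r) v) ((fderiv ℝ (fderiv ℝ f) x v) v) 0 := by
    have h4 : HasDerivAt (fun r => fderiv ℝ f (L r)) (fderiv ℝ (fderiv ℝ f) x v) 0 := by
      have h2' : HasFDerivAt (fderiv ℝ f) (fderiv ℝ (fderiv ℝ f) x) (L 0) :=
        hφ0.symm ▸ h2.hasFDerivAt
      exact h2'.comp_hasDerivAt 0 (hL 0)
    have := h4.clm_apply (hasDerivAt_const 0 v)
    simpa [hφ0] using this
  have hkey : fderiv ℝ (fun y => fderiv ℝ f y v) x v = (fderiv ℝ (fderiv ℝ f) x v) v := by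
    rw [fderiv_clm_apply h2 (differentiableAt_const v)]
    simp
  rw [hkey]
  apply deriv2_nonpos_of_isLocalMax hmaxφ hφdiff
  exact hG.congr_of_eventuallyEq hderiv_eq

end B12

open Filter Topology

section Helpers

lemma isOpen_upperHalf' : IsOpen upperHalf := isOpen_lt continuous_const continuous_snd
lemma isOpen_lowerHalf' : IsOpen lowerHalf := isOpen_lt continuous_snd continuous_const
lemma isClosed_UA' : IsClosed UA := isClosed_le continuous_const continuous_snd
lemma isClosed_UB' : IsClosed UB := isClosed_le continuous_snd continuous_const

lemma upper_subset_interior_UA : upperHalf ⊆ interior UA :=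
  interior_maximal (fun x hx => (le_of_lt hx : (0:ℝ) ≤ x.2)) isOpen_upperHalf'
lemma lower_subset_interior_UB : lowerHalf ⊆ interior UB :=
  interior_maximal (fun x hx => (le_of_lt hx : x.2 ≤ (0:ℝ))) isOpen_lowerHalf'

lemma convex_UA : Convex ℝ UA := by
  intro x hx y hy a b ha hb hab
  have h : (a • x + b • y).2 = a * x.2 + b * y.2 := rfl
  show (0:ℝ) ≤ (a • x + b • y).2
  rw [h]
  exact add_nonneg (mul_nonneg ha hx) (mul_nonneg hb hy)

lemma convex_UB : Convex ℝ UB := by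
  intro x hx y hy a b ha hb hab
  have h : (a • x + b • y).2 = a * x.2 + b * y.2 := rfl
  show (a • x + b • y).2 ≤ (0:ℝ)
  rw [h]
  exact add_nonpos (mul_nonpos_of_nonneg_of_nonpos ha hx)
    (mul_nonpos_of_nonneg_of_nonpos hb hy)

lemma uniqueDiffOn_UA : UniqueDiffOn ℝ UA :=
  uniqueDiffOn_convex convex_UA
    ⟨((0,0),1), upper_subset_interior_UA (by norm_num [upperHalf])⟩
lemma uniqueDiffOn_UB : UniqueDiffOn ℝ UB :=
  uniqueDiffOn_convex convex_UB
    ⟨((0,0),-1), lower_subset_interior_UB (by norm_num [lowerHalf])⟩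

lemma pdW_pdW_interior {s : Set ((ℝ × ℝ) × ℝ)} {f : (ℝ × ℝ) × ℝ → ℝ} {x v : (ℝ × ℝ) × ℝ}
    (hx : x ∈ interior s) :
    pdW s v (pdW s v f) x = fderiv ℝ (fun y => fderiv ℝ f y v) x v := by
  have hnx : s ∈ 𝓝 x := mem_interior_iff_mem_nhds.mp hx
  have hev : (fun y => pdW s v f y) =ᶠ[𝓝 x] (fun y => fderiv ℝ f y v) := by
    filter_upwards [isOpen_interior.mem_nhds hx] with y hy
    show fderivWithin ℝ f s y v = fderiv ℝ f y v
    rw [fderivWithin_of_mem_nhds (mem_interior_iff_mem_nhds.mp hy)]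
  have hev' : (fun y => pdW s v f y) =ᶠ[𝓝[s] x] (fun y => fderiv ℝ f y v) :=
    hev.filter_mono nhdsWithin_le_nhds
  have hx' : pdW s v f x = fderiv ℝ f x v := by
    show fderivWithin ℝ f s x v = _
    rw [fderivWithin_of_mem_nhds hnx]
  show fderivWithin ℝ (pdW s v f) s x v = _
  rw [hev'.fderivWithin_eq hx', fderivWithin_of_mem_nhds hnx]

lemma lapW_nonpos {s : Set ((ℝ × ℝ) × ℝ)} {f : (ℝ × ℝ) × ℝ → ℝ} {x : (ℝ × ℝ) × ℝ}
    (hx : x ∈ interior s) (hf : ContDiffOn ℝ 2 f s) (hmax : IsLocalMax f x) :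
    lapW s f x ≤ 0 := by
  have hnx : s ∈ 𝓝 x := mem_interior_iff_mem_nhds.mp hx
  have hfa : ContDiffAt ℝ 2 f x := hf.contDiffAt hnx
  have h1 := hessian_nonpos (v := e1) hfa hmax
  have h2 := hessian_nonpos (v := e2) hfa hmax
  have h3 := hessian_nonpos (v := e3) hfa hmax
  unfold lapW
  rw [pdW_pdW_interior hx, pdW_pdW_interior hx, pdW_pdW_interior hx]
  linarith

lemma lapH_nonpos {f : ℝ × ℝ → ℝ} {x : ℝ × ℝ}
    (hf : ContDiff ℝ 2 f) (hmax : IsLocalMax f x) : lapH f x ≤ 0 := by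
  have h1 := hessian_nonpos (v := ((1:ℝ),(0:ℝ))) hf.contDiffAt hmax
  have h2 := hessian_nonpos (v := ((0:ℝ),(1:ℝ))) hf.contDiffAt hmax
  unfold lapH pdH
  exact add_nonpos h1 h2

lemma pdW_sub {s : Set ((ℝ × ℝ) × ℝ)} {v : (ℝ × ℝ) × ℝ} {f g : (ℝ × ℝ) × ℝ → ℝ}
    {x : (ℝ × ℝ) × ℝ} (hs : UniqueDiffWithinAt ℝ s x)
    (hf : DifferentiableWithinAt ℝ f s x) (hg : DifferentiableWithinAt ℝ g s x) :
    pdW s v (fun y => f y - g y) x = pdW s v f x - pdW s v g x := by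
  show fderivWithin ℝ (fun y => f y - g y) s x v = _
  rw [fderivWithin_fun_sub hs hf hg]
  rfl

lemma lapW_sub {s : Set ((ℝ × ℝ) × ℝ)} (hsd : UniqueDiffOn ℝ s)
    {f g : (ℝ × ℝ) × ℝ → ℝ} {x : (ℝ × ℝ) × ℝ} (hx : x ∈ s)
    (hf : ContDiffOn ℝ 2 f s) (hg : ContDiffOn ℝ 2 g s) :
    lapW s (fun y => f y - g y) x = lapW s f x - lapW s g x := by
  have hf1 : DifferentiableOn ℝ f s := hf.differentiableOn two_ne_zero
  have hg1 : DifferentiableOn ℝ g s := hg.differentiableOn two_ne_zero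
  have hCf : ContDiffOn ℝ 1 (fun y => fderivWithin ℝ f s y) s :=
    hf.fderivWithin hsd (by norm_num)
  have hCg : ContDiffOn ℝ 1 (fun y => fderivWithin ℝ g s y) s :=
    hg.fderivWithin hsd (by norm_num)
  have key : ∀ v : (ℝ × ℝ) × ℝ, pdW s v (pdW s v (fun y => f y - g y)) x
      = pdW s v (pdW s v f) x - pdW s v (pdW s v g) x := by
    intro v
    have hcong : ∀ y ∈ s, pdW s v (fun z => f z - g z) y = pdW s v f y - pdW s v g y :=
      fun y hy => pdW_sub (hsd y hy) (hf1 y hy) (hg1 y hy)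
    have hfd : DifferentiableWithinAt ℝ (fun y => pdW s v f y) s x :=
      ((hCf.differentiableOn one_ne_zero) x hx).clm_apply (differentiableWithinAt_const v)
    have hgd : DifferentiableWithinAt ℝ (fun y => pdW s v g y) s x :=
      ((hCg.differentiableOn one_ne_zero) x hx).clm_apply (differentiableWithinAt_const v)
    show fderivWithin ℝ (pdW s v (fun z => f z - g z)) s x v = _
    rw [fderivWithin_congr hcong (hcong x hx)]
    rw [fderivWithin_fun_sub (hsd x hx) hfd hgd]
    rfl
  unfold lapW
  rw [key e1, key e2, key e3]
  ring

lemma lapH_sub {f g : ℝ × ℝ → ℝ} {x : ℝ × ℝ}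
    (hf : ContDiff ℝ 2 f) (hg : ContDiff ℝ 2 g) :
    lapH (fun y => f y - g y) x = lapH f x - lapH g x := by
  have hf1 : Differentiable ℝ f := hf.differentiable two_ne_zero
  have hg1 : Differentiable ℝ g := hg.differentiable two_ne_zero
  have hCf : ContDiff ℝ 1 (fderiv ℝ f) := hf.fderiv_right (by norm_num)
  have hCg : ContDiff ℝ 1 (fderiv ℝ g) := hg.fderiv_right (by norm_num)
  have key : ∀ v : ℝ × ℝ, pdH v (pdH v (fun y => f y - g y)) x
      = pdH v (pdH v f) x - pdH v (pdH v g) x := by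
    intro v
    have hcong : (fun y => pdH v (fun z => f z - g z) y) = fun y => pdH v f y - pdH v g y := by
      funext y
      show fderiv ℝ (fun z => f z - g z) y v = _
      rw [fderiv_fun_sub (hf1 y) (hg1 y)]
      rfl
    have hfd : DifferentiableAt ℝ (fun y => pdH v f y) x :=
      (hCf.differentiable one_ne_zero x).clm_apply (differentiableAt_const v)
    have hgd : DifferentiableAt ℝ (fun y => pdH v g y) x :=
      (hCg.differentiable one_ne_zero x).clm_apply (differentiableAt_const v)
    show fderiv ℝ (fun y => pdH v (fun z => f z - g z) y) x v = _
    rw [hcong, fderiv_fun_sub hfd hgd]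
    rfl
  unfold lapH
  rw [key (1,0), key (0,1)]
  ring

lemma pdW_e3_nonpos {f : (ℝ × ℝ) × ℝ → ℝ} {x : (ℝ × ℝ) × ℝ} (hx2 : x.2 = 0)
    (hd : DifferentiableWithinAt ℝ f UA x) (hmax : IsMaxOn f UA x) :
    pdW UA e3 f x ≤ 0 := by
  set L : ℝ → (ℝ × ℝ) × ℝ := fun r => x + r • e3 with hL
  have hL0 : L 0 = x := by simp [hL]
  have hLr2 : ∀ r, (L r).2 = r := by
    intro r
    show x.2 + r * 1 = r
    rw [hx2]; ring
  have hLd : HasDerivWithinAt L e3 (Ici 0) 0 := by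
    have := ((hasDerivAt_id (0:ℝ)).smul_const e3).const_add x
    rw [one_smul] at this
    exact this.hasDerivWithinAt
  have hmaps : MapsTo L (Ici 0) UA := by
    intro r hr
    show (0:ℝ) ≤ (L r).2
    rw [hLr2]; exact hr
  have hfd : HasFDerivWithinAt f (fderivWithin ℝ f UA x) UA (L 0) := by
    rw [hL0]; exact hd.hasFDerivWithinAt
  have hcomp : HasDerivWithinAt (f ∘ L) (fderivWithin ℝ f UA x e3) (Ici 0) 0 :=
    hfd.comp_hasDerivWithinAt 0 hLd hmaps
  have hmax' : IsMaxOn (f ∘ L) (Ici 0) 0 := by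
    intro r hr
    show f (L r) ≤ f (L 0)
    rw [hL0]
    exact hmax (hmaps hr)
  have hne : (𝓝[Ici (0:ℝ) \ {0}] 0).NeBot := by
    rw [Ici_sdiff_left]
    exact nhdsGT_neBot 0
  exact deriv_nonpos_of_isMaxOn_right hmax' hcomp hne (fun r hr => hr)

lemma pdW_e3_nonneg {f : (ℝ × ℝ) × ℝ → ℝ} {x : (ℝ × ℝ) × ℝ} (hx2 : x.2 = 0)
    (hd : DifferentiableWithinAt ℝ f UB x) (hmax : IsMaxOn f UB x) :
    0 ≤ pdW UB e3 f x := by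
  set L : ℝ → (ℝ × ℝ) × ℝ := fun r => x + r • e3 with hL
  have hL0 : L 0 = x := by simp [hL]
  have hLr2 : ∀ r, (L r).2 = r := by
    intro r
    show x.2 + r * 1 = r
    rw [hx2]; ring
  have hLd : HasDerivWithinAt L e3 (Iic 0) 0 := by
    have := ((hasDerivAt_id (0:ℝ)).smul_const e3).const_add x
    rw [one_smul] at this
    exact this.hasDerivWithinAt
  have hmaps : MapsTo L (Iic 0) UB := by
    intro r hr
    show (L r).2 ≤ (0:ℝ)
    rw [hLr2]; exact hr
  have hfd : HasFDerivWithinAt f (fderivWithin ℝ f UB x) UB (L 0) := by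
    rw [hL0]; exact hd.hasFDerivWithinAt
  have hcomp : HasDerivWithinAt (f ∘ L) (fderivWithin ℝ f UB x e3) (Iic 0) 0 :=
    hfd.comp_hasDerivWithinAt 0 hLd hmaps
  have hmax' : IsMaxOn (f ∘ L) (Iic 0) 0 := by
    intro r hr
    show f (L r) ≤ f (L 0)
    rw [hL0]
    exact hmax (hmaps hr)
  have hne : (𝓝[Iic (0:ℝ) \ {0}] 0).NeBot := by
    rw [Iic_sdiff_right]
    exact nhdsLT_neBot 0
  exact deriv_nonneg_of_isMaxOn_left hmax' hcomp hne (fun r hr => hr)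

end Helpers


open Filter Topology

lemma mem_UA {x : (ℝ × ℝ) × ℝ} : x ∈ UA ↔ 0 ≤ x.2 := Iff.rfl
lemma mem_UB {x : (ℝ × ℝ) × ℝ} : x ∈ UB ↔ x.2 ≤ 0 := Iff.rfl

lemma key_le (T κA κB κS αS : ℝ) (hT : 0 < T)
    (hκA : 0 < κA) (hκB : 0 < κB) (hκS : 0 < κS) (hαS : 0 < αS)
    (θA₁ θB₁ θA₂ θB₂ : (ℝ × ℝ) × ℝ → ℝ → ℝ) (θS₁ θS₂ : ℝ × ℝ → ℝ → ℝ)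
    (hsol₁ : ClassicalDecayingSolution T κA κB κS αS θA₁ θB₁ θS₁)
    (hsol₂ : ClassicalDecayingSolution T κA κB κS αS θA₂ θB₂ θS₂)
    (hcA₁ : ContinuousOn (fun p : ((ℝ × ℝ) × ℝ) × ℝ => θA₁ p.1 p.2) (UA ×ˢ Set.Ico 0 T))
    (hcB₁ : ContinuousOn (fun p : ((ℝ × ℝ) × ℝ) × ℝ => θB₁ p.1 p.2) (UB ×ˢ Set.Ico 0 T))
    (hcA₂ : ContinuousOn (fun p : ((ℝ × ℝ) × ℝ) × ℝ => θA₂ p.1 p.2) (UA ×ˢ Set.Ico 0 T))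
    (hcB₂ : ContinuousOn (fun p : ((ℝ × ℝ) × ℝ) × ℝ => θB₂ p.1 p.2) (UB ×ˢ Set.Ico 0 T))
    (hdec : ∃ M : ℝ → ℝ, ContinuousOn M (Set.Ico 0 T) ∧
      (∀ x ∈ UA, ∀ t ∈ Set.Ioo (0:ℝ) T,
        |θA₁ x t| ≤ M t / (1 + ‖x‖) ^ 4 ∧ |θA₂ x t| ≤ M t / (1 + ‖x‖) ^ 4) ∧
      (∀ x ∈ UB, ∀ t ∈ Set.Ioo (0:ℝ) T,
        |θB₁ x t| ≤ M t / (1 + ‖x‖) ^ 4 ∧ |θB₂ x t| ≤ M t / (1 + ‖x‖) ^ 4))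
    (hinitA : ∀ x ∈ UA, θA₁ x 0 = θA₂ x 0)
    (hinitB : ∀ x ∈ UB, θB₁ x 0 = θB₂ x 0) :
    (∀ x ∈ UA, ∀ t ∈ Set.Ioo (0 : ℝ) T, θA₁ x t ≤ θA₂ x t) ∧
    (∀ x ∈ UB, ∀ t ∈ Set.Ioo (0 : ℝ) T, θB₁ x t ≤ θB₂ x t) := by
  classical
  set W : (ℝ × ℝ) × ℝ → ℝ → ℝ :=
    fun x t => if 0 ≤ x.2 then θA₁ x t - θA₂ x t else θB₁ x t - θB₂ x t with hWdef
  suffices hW : ∀ x : (ℝ × ℝ) × ℝ, ∀ t ∈ Ioo (0:ℝ) T, W x t ≤ 0 by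
    constructor
    · intro x hx t ht
      have h := hW x t ht
      simp only [hWdef] at h
      rw [if_pos (mem_UA.mp hx)] at h
      linarith
    · intro x hx t ht
      rcases lt_or_eq_of_le (mem_UB.mp hx) with h | h
      · have h' := hW x t ht
        simp only [hWdef] at h'
        rw [if_neg (not_le.mpr h)] at h'
        linarith
      · have hxeq : x = (x.1, 0) := by rw [← h]
        have h' := hW x t ht
        simp only [hWdef] at h'
        rw [if_pos (le_of_eq h.symm : (0:ℝ) ≤ x.2)] at h'
        have e1 : θA₁ x t = θB₁ x t := by
          rw [hxeq, hsol₁.interfaceA x.1 t ht, hsol₁.interfaceB x.1 t ht]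
        have e2 : θA₂ x t = θB₂ x t := by
          rw [hxeq, hsol₂.interfaceA x.1 t ht, hsol₂.interfaceB x.1 t ht]
        linarith
  by_contra hcon
  push_neg at hcon
  obtain ⟨x₁, t₁, ht₁, hpos⟩ := hcon
  set τ : ℝ := (t₁ + T)/2 with hτdef
  have hτ0 : 0 < τ := by
    have := ht₁.1; have := ht₁.2
    simp only [hτdef]; linarith
  have hτT : τ < T := by
    have := ht₁.2
    simp only [hτdef]; linarith
  have ht₁τ : t₁ ≤ τ := by
    have := ht₁.2
    simp only [hτdef]; linarith
  set c : ℝ := W x₁ t₁ / 2 with hcdef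
  have hc0 : 0 < c := by simp only [hcdef]; linarith
  set ε : ℝ := W x₁ t₁ / (2*τ) with hεdef
  have hε0 : 0 < ε := by
    simp only [hεdef]
    positivity
  have hIccsub : Icc (0:ℝ) τ ⊆ Ico 0 T := fun s hs => ⟨hs.1, lt_of_le_of_lt hs.2 hτT⟩
  obtain ⟨M, hMcont, hMA, hMB⟩ := hdec
  obtain ⟨tM, htM, hMmax⟩ := isCompact_Icc.exists_isMaxOn (Set.nonempty_Icc.mpr hτ0.le)
    (hMcont.mono hIccsub)
  set M₀ : ℝ := M tM with hM₀def
  have hM₀ : ∀ t ∈ Icc (0:ℝ) τ, M t ≤ M₀ := fun t ht => hMmax ht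
  have hM₀0 : 0 ≤ M₀ := by
    have h := (hMA ((0,0),0) (mem_UA.mpr (le_refl 0)) τ ⟨hτ0, hτT⟩).1
    have hn : ‖(((0:ℝ),(0:ℝ)),(0:ℝ))‖ = 0 := by simp
    rw [hn] at h
    norm_num at h
    calc (0:ℝ) ≤ |θA₁ ((0,0),0) τ| := abs_nonneg _
      _ ≤ M τ := h
      _ ≤ M₀ := hM₀ τ (right_mem_Icc.mpr hτ0.le)
  -- W(x,0) = 0
  have hW0 : ∀ x : (ℝ × ℝ) × ℝ, W x 0 = 0 := by
    intro x
    by_cases hx : (0:ℝ) ≤ x.2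
    · simp only [hWdef]; rw [if_pos hx, hinitA x (mem_UA.mpr hx), sub_self]
    · simp only [hWdef]; rw [if_neg hx, hinitB x (mem_UB.mpr (le_of_lt (not_le.mp hx))), sub_self]
  -- decay bound for W
  have hWb : ∀ x : (ℝ × ℝ) × ℝ, ∀ t ∈ Icc (0:ℝ) τ, W x t ≤ 2*M₀ / (1+‖x‖)^4 := by
    intro x t ht
    have hP : (0:ℝ) < (1+‖x‖)^4 := by positivity
    rcases eq_or_lt_of_le ht.1 with h0 | h0
    · rw [← h0, hW0 x]
      positivity
    · have htT : t ∈ Ioo 0 T := ⟨h0, lt_of_le_of_lt ht.2 hτT⟩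
      have hMt : M t ≤ M₀ := hM₀ t ht
      have e1 : M t / (1+‖x‖)^4 ≤ M₀ / (1+‖x‖)^4 := by gcongr
      have e2 : 2*M₀/(1+‖x‖)^4 = M₀/(1+‖x‖)^4 + M₀/(1+‖x‖)^4 := by ring
      by_cases hx : (0:ℝ) ≤ x.2
      · obtain ⟨h1, h2⟩ := hMA x (mem_UA.mpr hx) t htT
        have hWx : W x t = θA₁ x t - θA₂ x t := by simp only [hWdef]; rw [if_pos hx]
        have l1 := le_abs_self (θA₁ x t)
        have l2 := neg_abs_le (θA₂ x t)
        rw [hWx, e2]; linarith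
      · obtain ⟨h1, h2⟩ := hMB x (mem_UB.mpr (le_of_lt (not_le.mp hx))) t htT
        have hWx : W x t = θB₁ x t - θB₂ x t := by simp only [hWdef]; rw [if_neg hx]
        have l1 := le_abs_self (θB₁ x t)
        have l2 := neg_abs_le (θB₂ x t)
        rw [hWx, e2]; linarith
  -- continuity of W
  have hWcont : ContinuousOn (fun p : ((ℝ × ℝ) × ℝ) × ℝ => W p.1 p.2) (univ ×ˢ Icc 0 τ) := by
    have hsubA : UA ×ˢ Icc (0:ℝ) τ ⊆ UA ×ˢ Ico 0 T := Set.prod_mono (le_refl _) hIccsub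
    have hsubB : UB ×ˢ Icc (0:ℝ) τ ⊆ UB ×ˢ Ico 0 T := Set.prod_mono (le_refl _) hIccsub
    have hA : ContinuousOn (fun p : ((ℝ × ℝ) × ℝ) × ℝ => W p.1 p.2) (UA ×ˢ Icc 0 τ) := by
      apply ContinuousOn.congr ((hcA₁.sub hcA₂).mono hsubA)
      intro p hp
      show W p.1 p.2 = θA₁ p.1 p.2 - θA₂ p.1 p.2
      simp only [hWdef]; rw [if_pos (mem_UA.mp hp.1)]
    have hB : ContinuousOn (fun p : ((ℝ × ℝ) × ℝ) × ℝ => W p.1 p.2) (UB ×ˢ Icc 0 τ) := by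
      apply ContinuousOn.congr ((hcB₁.sub hcB₂).mono hsubB)
      intro p hp
      show W p.1 p.2 = θB₁ p.1 p.2 - θB₂ p.1 p.2
      by_cases h0 : (0:ℝ) ≤ p.1.2
      · have h00 : p.1.2 = 0 := le_antisymm (mem_UB.mp hp.1) h0
        have hxeq : p.1 = (p.1.1, 0) := by rw [← h00]
        have hWx : W p.1 p.2 = θA₁ p.1 p.2 - θA₂ p.1 p.2 := by
          simp only [hWdef]; rw [if_pos h0]
        rw [hWx]
        rcases eq_or_lt_of_le (hp.2.1 : (0:ℝ) ≤ p.2) with ht0 | ht0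
        · rw [← ht0, hinitA p.1 (mem_UA.mpr h0), hinitB p.1 hp.1, sub_self, sub_self]
        · have htT : p.2 ∈ Ioo 0 T := ⟨ht0, lt_of_le_of_lt hp.2.2 hτT⟩
          rw [hxeq, hsol₁.interfaceA p.1.1 p.2 htT, hsol₂.interfaceA p.1.1 p.2 htT,
            hsol₁.interfaceB p.1.1 p.2 htT, hsol₂.interfaceB p.1.1 p.2 htT]
      · simp only [hWdef]; rw [if_neg h0]
    have hunion : (univ : Set ((ℝ × ℝ) × ℝ)) ×ˢ Icc (0:ℝ) τ
        = (UA ×ˢ Icc 0 τ) ∪ (UB ×ˢ Icc 0 τ) := by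
      rw [← Set.union_prod]
      congr 1
      ext x
      simp only [UA, UB, mem_union, mem_setOf_eq, mem_univ, true_iff]
      exact le_total 0 x.2
    rw [hunion]
    intro p hp
    have hcwA : ContinuousWithinAt (fun p : ((ℝ × ℝ) × ℝ) × ℝ => W p.1 p.2) (UA ×ˢ Icc 0 τ) p := by
      rcases em (p ∈ UA ×ˢ Icc (0:ℝ) τ) with h | h
      · exact hA p h
      · apply continuousWithinAt_of_notMem_closure
        rwa [IsClosed.closure_eq (isClosed_UA'.prod isClosed_Icc)]
    have hcwB : ContinuousWithinAt (fun p : ((ℝ × ℝ) × ℝ) × ℝ => W p.1 p.2) (UB ×ˢ Icc 0 τ) p := by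
      rcases em (p ∈ UB ×ˢ Icc (0:ℝ) τ) with h | h
      · exact hB p h
      · apply continuousWithinAt_of_notMem_closure
        rwa [IsClosed.closure_eq (isClosed_UB'.prod isClosed_Icc)]
    exact hcwA.union hcwB
  -- compact maximum
  set R : ℝ := max ‖x₁‖ (2*M₀/c) with hRdef
  set K : Set (((ℝ × ℝ) × ℝ) × ℝ) := Metric.closedBall (0:(ℝ × ℝ) × ℝ) R ×ˢ Icc (0:ℝ) τ
    with hKdef
  have hKc : IsCompact K := (isCompact_closedBall _ _).prod isCompact_Icc
  have hx₁K : ((x₁, t₁) : ((ℝ × ℝ) × ℝ) × ℝ) ∈ K :=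
    ⟨mem_closedBall_zero_iff.mpr (le_max_left _ _), ⟨ht₁.1.le, ht₁τ⟩⟩
  set G : (((ℝ × ℝ) × ℝ) × ℝ) → ℝ := fun p => W p.1 p.2 - ε * p.2 with hGdef
  have hGcont : ContinuousOn G (univ ×ˢ Icc 0 τ) :=
    hWcont.sub (Continuous.continuousOn (by fun_prop))
  have hKsub : K ⊆ univ ×ˢ Icc (0:ℝ) τ := Set.prod_mono (subset_univ _) (le_refl _)
  obtain ⟨p₀, hp₀K, hp₀max⟩ := hKc.exists_isMaxOn ⟨(x₁,t₁), hx₁K⟩ (hGcont.mono hKsub)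
  set x₀ : (ℝ × ℝ) × ℝ := p₀.1 with hx₀def
  set t₀ : ℝ := p₀.2 with ht₀def
  have hp₀eq : p₀ = (x₀, t₀) := rfl
  have ht₀mem : t₀ ∈ Icc (0:ℝ) τ := hp₀K.2
  have hGc : c ≤ G (x₀, t₀) := by
    have h1 : G (x₁,t₁) ≤ G p₀ := hp₀max hx₁K
    have h2 : c ≤ G (x₁,t₁) := by
      have hετ : ε * τ = W x₁ t₁ / 2 := by
        simp only [hεdef]
        field_simp
      have hεt₁ : ε * t₁ ≤ ε * τ := by
        apply mul_le_mul_of_nonneg_left ht₁τ hε0.le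
      have : G (x₁,t₁) = W x₁ t₁ - ε * t₁ := rfl
      simp only [hcdef]
      rw [this]
      linarith
    rw [← hp₀eq]
    linarith
  -- spatial global max
  have hspace : ∀ y : (ℝ × ℝ) × ℝ, W y t₀ ≤ W x₀ t₀ := by
    intro y
    have hG₀ : G (x₀, t₀) = W x₀ t₀ - ε * t₀ := rfl
    rcases le_or_gt ‖y‖ R with hy | hy
    · have h := hp₀max (show ((y, t₀) : ((ℝ × ℝ) × ℝ) × ℝ) ∈ K from
        ⟨mem_closedBall_zero_iff.mpr hy, ht₀mem⟩)
      have hGy : G (y, t₀) = W y t₀ - ε * t₀ := rfl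
      have h' : G (y,t₀) ≤ G p₀ := h
      rw [hp₀eq] at h'
      rw [hGy, hG₀] at h'
      linarith
    · have h1 : W y t₀ ≤ 2*M₀/(1+‖y‖)^4 := hWb y t₀ ht₀mem
      have h2 : 2*M₀/(1+‖y‖)^4 < c := by
        have hR : 2*M₀/c ≤ R := le_max_right _ _
        have hbase : (1:ℝ) ≤ 1 + ‖y‖ := by linarith [norm_nonneg y]
        have hpow : 1 + ‖y‖ ≤ (1+‖y‖)^4 := le_self_pow₀ hbase (by norm_num)
        have hP : 2*M₀/c < (1+‖y‖)^4 := by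
          calc 2*M₀/c ≤ R := hR
            _ < ‖y‖ := hy
            _ ≤ 1 + ‖y‖ := by linarith
            _ ≤ (1+‖y‖)^4 := hpow
        have hP0 : (0:ℝ) < (1+‖y‖)^4 := by positivity
        rw [div_lt_iff₀ hP0]
        have := (div_lt_iff₀ hc0).mp hP
        linarith
      have h3 : ε * t₀ ≥ 0 := mul_nonneg hε0.le ht₀mem.1
      have h4 : c ≤ W x₀ t₀ := by rw [hG₀] at hGc; linarith
      linarith
  -- t₀ > 0
  have ht₀pos : 0 < t₀ := by
    rcases eq_or_lt_of_le ht₀mem.1 with h | h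
    · exfalso
      have : G (x₀, t₀) = W x₀ t₀ - ε * t₀ := rfl
      rw [this, ← h, hW0 x₀] at hGc
      simp at hGc
      linarith
    · exact h
  have ht₀T : t₀ ∈ Ioo (0:ℝ) T := ⟨ht₀pos, lt_of_le_of_lt ht₀mem.2 hτT⟩
  -- temporal derivative bound
  have htime : ∀ h : ℝ → ℝ, (∀ s, h s = W x₀ s) → DifferentiableAt ℝ h t₀ →
      ε ≤ deriv h t₀ := by
    intro h hh hd
    have hmax : IsMaxOn (fun s => h s - ε * s) (Icc 0 t₀) t₀ := by
      intro s hs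
      have hsK : ((x₀, s) : ((ℝ × ℝ) × ℝ) × ℝ) ∈ K := ⟨hp₀K.1, ⟨hs.1, le_trans hs.2 ht₀mem.2⟩⟩
      have h1 : G (x₀,s) ≤ G p₀ := hp₀max hsK
      rw [hp₀eq] at h1
      show h s - ε * s ≤ h t₀ - ε * t₀
      rw [hh, hh]
      exact h1
    have hd2 : HasDerivWithinAt (fun s => h s - ε*s) (deriv h t₀ - ε) (Icc 0 t₀) t₀ := by
      have h1 : HasDerivAt (fun s => ε * s) (ε * 1) t₀ := (hasDerivAt_id t₀).const_mul ε
      rw [mul_one] at h1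
      exact ((hd.hasDerivAt.sub h1)).hasDerivWithinAt
    have hne : NeBot (𝓝[Icc (0:ℝ) t₀ \ {t₀}] t₀) := by
      rw [Icc_sdiff_right]
      apply mem_closure_iff_nhdsWithin_neBot.mp
      rw [closure_Ico (ne_of_lt ht₀pos)]
      exact right_mem_Icc.mpr ht₀pos.le
    have := deriv_nonneg_of_isMaxOn_left hmax hd2 hne (fun s hs => hs.2)
    linarith
  -- case analysis on x₀.2
  rcases lt_trichotomy x₀.2 0 with hc2 | hc2 | hc2
  · -- lower half: x₀.2 < 0
    set f : (ℝ × ℝ) × ℝ → ℝ := fun y => θB₁ y t₀ - θB₂ y t₀ with hfdef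
    have hx₀UB : x₀ ∈ UB := mem_UB.mpr hc2.le
    have hCf : ContDiffOn ℝ 2 f UB := (hsol₁.spaceB t₀ ht₀T).sub (hsol₂.spaceB t₀ ht₀T)
    have hint : x₀ ∈ interior UB := lower_subset_interior_UB hc2
    have hlocmax : IsLocalMax f x₀ := by
      filter_upwards [isOpen_lowerHalf'.mem_nhds hc2] with y hy
      have h1 : f y = W y t₀ := by
        simp only [hfdef, hWdef]; rw [if_neg (not_le.mpr hy)]
      have h2 : f x₀ = W x₀ t₀ := by
        simp only [hfdef, hWdef]; rw [if_neg (not_le.mpr hc2)]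
      rw [h1, h2]; exact hspace y
    have hlap : lapW UB f x₀ ≤ 0 := lapW_nonpos hint hCf hlocmax
    have hd₁ := hsol₁.timeB x₀ hx₀UB t₀ ht₀T
    have hd₂ := hsol₂.timeB x₀ hx₀UB t₀ ht₀T
    have hε' := htime (fun s => θB₁ x₀ s - θB₂ x₀ s)
      (fun s => by simp only [hWdef]; rw [if_neg (not_le.mpr hc2)]) (hd₁.sub hd₂)
    have hderiv : deriv (fun s => θB₁ x₀ s - θB₂ x₀ s) t₀
        = deriv (θB₁ x₀) t₀ - deriv (θB₂ x₀) t₀ := deriv_sub hd₁ hd₂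
    have hpde₁ := hsol₁.pdeB x₀ hc2 t₀ ht₀T
    have hpde₂ := hsol₂.pdeB x₀ hc2 t₀ ht₀T
    have hlapsub := lapW_sub uniqueDiffOn_UB hx₀UB (hsol₁.spaceB t₀ ht₀T)
      (hsol₂.spaceB t₀ ht₀T)
    have hklap : κB * lapW UB f x₀ ≤ 0 := mul_nonpos_iff.mpr (Or.inl ⟨hκB.le, hlap⟩)
    rw [hderiv, hpde₁, hpde₂] at hε'
    simp only [hfdef] at hlapsub hklap
    have hmul : κB * lapW UB (fun y => θB₁ y t₀) x₀
        - κB * lapW UB (fun y => θB₂ y t₀) x₀ ≤ 0 := by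
      rw [← mul_sub, ← hlapsub]; exact hklap
    linarith only [hε', hmul, hε0]
  · -- interface: x₀.2 = 0
    have hx₀UA : x₀ ∈ UA := mem_UA.mpr (le_of_eq hc2.symm)
    have hx₀UB : x₀ ∈ UB := mem_UB.mpr (le_of_eq hc2)
    have hx₀eq : x₀ = (x₀.1, 0) := by rw [← hc2]
    set fA : (ℝ × ℝ) × ℝ → ℝ := fun y => θA₁ y t₀ - θA₂ y t₀ with hfAdef
    set fB : (ℝ × ℝ) × ℝ → ℝ := fun y => θB₁ y t₀ - θB₂ y t₀ with hfBdef
    set fS : ℝ × ℝ → ℝ := fun yh => θS₁ yh t₀ - θS₂ yh t₀ with hfSdef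
    have hWA : ∀ y ∈ UA, fA y = W y t₀ := by
      intro y hy
      simp only [hfAdef, hWdef]; rw [if_pos (mem_UA.mp hy)]
    have hWB : ∀ y ∈ UB, fB y = W y t₀ := by
      intro y hy
      by_cases hy0 : (0:ℝ) ≤ y.2
      · have hyy : y.2 = 0 := le_antisymm (mem_UB.mp hy) hy0
        have hyeq : y = (y.1, 0) := by rw [← hyy]
        have hWy : W y t₀ = θA₁ y t₀ - θA₂ y t₀ := by simp only [hWdef]; rw [if_pos hy0]
        simp only [hfBdef]
        rw [hWy, hyeq, hsol₁.interfaceB y.1 t₀ ht₀T, hsol₂.interfaceB y.1 t₀ ht₀T,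
          hsol₁.interfaceA y.1 t₀ ht₀T, hsol₂.interfaceA y.1 t₀ ht₀T]
      · simp only [hfBdef, hWdef]; rw [if_neg hy0]
    have hSW : ∀ zh : ℝ × ℝ, fS zh = W (zh,0) t₀ := by
      intro zh
      have h0 : (0:ℝ) ≤ ((zh,(0:ℝ)) : (ℝ × ℝ) × ℝ).2 := le_refl 0
      have hWz : W (zh,0) t₀ = θA₁ (zh,0) t₀ - θA₂ (zh,0) t₀ := by
        simp only [hWdef]; rw [if_pos h0]
      simp only [hfSdef]
      rw [hWz, hsol₁.interfaceA zh t₀ ht₀T, hsol₂.interfaceA zh t₀ ht₀T]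
    have hmaxA : IsMaxOn fA UA x₀ := by
      intro y hy
      show fA y ≤ fA x₀
      rw [hWA y hy, hWA x₀ hx₀UA]
      exact hspace y
    have hmaxB : IsMaxOn fB UB x₀ := by
      intro y hy
      show fB y ≤ fB x₀
      rw [hWB y hy, hWB x₀ hx₀UB]
      exact hspace y
    have hmaxS : ∀ yh : ℝ × ℝ, fS yh ≤ fS x₀.1 := by
      intro yh
      rw [hSW yh, hSW x₀.1, ← hx₀eq]
      exact hspace (yh, 0)
    have hCfS : ContDiff ℝ 2 fS := (hsol₁.spaceS t₀ ht₀T).sub (hsol₂.spaceS t₀ ht₀T)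
    have hlapS : lapH fS x₀.1 ≤ 0 :=
      lapH_nonpos hCfS (Filter.Eventually.of_forall hmaxS)
    have hdfA : DifferentiableWithinAt ℝ fA UA x₀ :=
      (((hsol₁.spaceA t₀ ht₀T).sub (hsol₂.spaceA t₀ ht₀T)).differentiableOn two_ne_zero) x₀ hx₀UA
    have hdfB : DifferentiableWithinAt ℝ fB UB x₀ :=
      (((hsol₁.spaceB t₀ ht₀T).sub (hsol₂.spaceB t₀ ht₀T)).differentiableOn two_ne_zero) x₀ hx₀UB
    have hpA : pdW UA e3 fA x₀ ≤ 0 := pdW_e3_nonpos hc2 hdfA hmaxA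
    have hpB : 0 ≤ pdW UB e3 fB x₀ := pdW_e3_nonneg hc2 hdfB hmaxB
    -- time derivative
    have hdA₁ := hsol₁.timeA x₀ hx₀UA t₀ ht₀T
    have hdA₂ := hsol₂.timeA x₀ hx₀UA t₀ ht₀T
    have hε' := htime (fun s => θA₁ x₀ s - θA₂ x₀ s)
      (fun s => by simp only [hWdef]; rw [if_pos (mem_UA.mp hx₀UA)]) (hdA₁.sub hdA₂)
    have hev : (fun s => θA₁ x₀ s - θA₂ x₀ s) =ᶠ[𝓝 t₀]
        (fun s => θS₁ x₀.1 s - θS₂ x₀.1 s) := by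
      filter_upwards [Ioo_mem_nhds ht₀T.1 ht₀T.2] with s hs
      rw [hx₀eq, hsol₁.interfaceA x₀.1 s hs, hsol₂.interfaceA x₀.1 s hs]
    have hde : deriv (fun s => θA₁ x₀ s - θA₂ x₀ s) t₀
        = deriv (fun s => θS₁ x₀.1 s - θS₂ x₀.1 s) t₀ := hev.deriv_eq
    have hdS₁ := hsol₁.timeS x₀.1 t₀ ht₀T
    have hdS₂ := hsol₂.timeS x₀.1 t₀ ht₀T
    have hderivS : deriv (fun s => θS₁ x₀.1 s - θS₂ x₀.1 s) t₀
        = deriv (θS₁ x₀.1) t₀ - deriv (θS₂ x₀.1) t₀ := deriv_sub hdS₁ hdS₂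
    have hpdeS₁ := hsol₁.pdeS x₀.1 t₀ ht₀T
    have hpdeS₂ := hsol₂.pdeS x₀.1 t₀ ht₀T
    rw [← hx₀eq] at hpdeS₁ hpdeS₂
    have hlapHsub : lapH (fun yh => θS₁ yh t₀ - θS₂ yh t₀) x₀.1
        = lapH (fun yh => θS₁ yh t₀) x₀.1 - lapH (fun yh => θS₂ yh t₀) x₀.1 :=
      lapH_sub (hsol₁.spaceS t₀ ht₀T) (hsol₂.spaceS t₀ ht₀T)
    have hdA₁' : DifferentiableWithinAt ℝ (fun y => θA₁ y t₀) UA x₀ :=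
      ((hsol₁.spaceA t₀ ht₀T).differentiableOn two_ne_zero) x₀ hx₀UA
    have hdA₂' : DifferentiableWithinAt ℝ (fun y => θA₂ y t₀) UA x₀ :=
      ((hsol₂.spaceA t₀ ht₀T).differentiableOn two_ne_zero) x₀ hx₀UA
    have hdB₁' : DifferentiableWithinAt ℝ (fun y => θB₁ y t₀) UB x₀ :=
      ((hsol₁.spaceB t₀ ht₀T).differentiableOn two_ne_zero) x₀ hx₀UB
    have hdB₂' : DifferentiableWithinAt ℝ (fun y => θB₂ y t₀) UB x₀ :=
      ((hsol₂.spaceB t₀ ht₀T).differentiableOn two_ne_zero) x₀ hx₀UB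
    have hpWAsub : pdW UA e3 (fun y => θA₁ y t₀ - θA₂ y t₀) x₀
        = pdW UA e3 (fun y => θA₁ y t₀) x₀ - pdW UA e3 (fun y => θA₂ y t₀) x₀ :=
      pdW_sub (uniqueDiffOn_UA x₀ hx₀UA) hdA₁' hdA₂'
    have hpWBsub : pdW UB e3 (fun y => θB₁ y t₀ - θB₂ y t₀) x₀
        = pdW UB e3 (fun y => θB₁ y t₀) x₀ - pdW UB e3 (fun y => θB₂ y t₀) x₀ :=
      pdW_sub (uniqueDiffOn_UB x₀ hx₀UB) hdB₁' hdB₂'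
    -- sign facts with coefficients
    have m1 : κS * lapH fS x₀.1 ≤ 0 := mul_nonpos_iff.mpr (Or.inl ⟨hκS.le, hlapS⟩)
    have m2 : κA * pdW UA e3 fA x₀ ≤ 0 := mul_nonpos_iff.mpr (Or.inl ⟨hκA.le, hpA⟩)
    have m3 : 0 ≤ κB * pdW UB e3 fB x₀ := mul_nonneg hκB.le hpB
    have hdd : ε ≤ deriv (θS₁ x₀.1) t₀ - deriv (θS₂ x₀.1) t₀ := by
      rw [hde, hderivS] at hε'
      exact hε'
    have hαd : αS * ε ≤ αS * (deriv (θS₁ x₀.1) t₀ - deriv (θS₂ x₀.1) t₀) :=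
      mul_le_mul_of_nonneg_left hdd hαS.le
    have hαε : 0 < αS * ε := mul_pos hαS hε0
    simp only [hfSdef] at m1
    simp only [hfAdef] at m2 hpWAsub
    simp only [hfBdef] at m3 hpWBsub
    rw [hlapHsub] at m1
    rw [hpWAsub] at m2
    rw [hpWBsub] at m3
    linarith only [hpdeS₁, hpdeS₂, m1, m2, m3, hαd, hαε]
  · -- upper half: x₀.2 > 0
    set f : (ℝ × ℝ) × ℝ → ℝ := fun y => θA₁ y t₀ - θA₂ y t₀ with hfdef
    have hx₀UA : x₀ ∈ UA := mem_UA.mpr hc2.le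
    have hCf : ContDiffOn ℝ 2 f UA := (hsol₁.spaceA t₀ ht₀T).sub (hsol₂.spaceA t₀ ht₀T)
    have hint : x₀ ∈ interior UA := upper_subset_interior_UA hc2
    have hlocmax : IsLocalMax f x₀ := by
      filter_upwards [isOpen_upperHalf'.mem_nhds hc2] with y hy
      have h1 : f y = W y t₀ := by
        simp only [hfdef, hWdef]; rw [if_pos (le_of_lt hy)]
      have h2 : f x₀ = W x₀ t₀ := by
        simp only [hfdef, hWdef]; rw [if_pos (mem_UA.mp hx₀UA)]
      rw [h1, h2]; exact hspace y
    have hlap : lapW UA f x₀ ≤ 0 := lapW_nonpos hint hCf hlocmax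
    have hd₁ := hsol₁.timeA x₀ hx₀UA t₀ ht₀T
    have hd₂ := hsol₂.timeA x₀ hx₀UA t₀ ht₀T
    have hε' := htime (fun s => θA₁ x₀ s - θA₂ x₀ s)
      (fun s => by simp only [hWdef]; rw [if_pos (mem_UA.mp hx₀UA)]) (hd₁.sub hd₂)
    have hderiv : deriv (fun s => θA₁ x₀ s - θA₂ x₀ s) t₀
        = deriv (θA₁ x₀) t₀ - deriv (θA₂ x₀) t₀ := deriv_sub hd₁ hd₂
    have hpde₁ := hsol₁.pdeA x₀ hc2 t₀ ht₀T
    have hpde₂ := hsol₂.pdeA x₀ hc2 t₀ ht₀T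
    have hlapsub := lapW_sub uniqueDiffOn_UA hx₀UA (hsol₁.spaceA t₀ ht₀T)
      (hsol₂.spaceA t₀ ht₀T)
    have hklap : κA * lapW UA f x₀ ≤ 0 := mul_nonpos_iff.mpr (Or.inl ⟨hκA.le, hlap⟩)
    rw [hderiv, hpde₁, hpde₂] at hε'
    simp only [hfdef] at hlapsub hklap
    have hmul : κA * lapW UA (fun y => θA₁ y t₀) x₀
        - κA * lapW UA (fun y => θA₂ y t₀) x₀ ≤ 0 := by
      rw [← mul_sub, ← hlapsub]; exact hklap
    linarith only [hε', hmul, hε0]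

/-- Lemma 5.1: uniqueness of classical decaying solutions.
If two classical decaying solutions of the three-phase heat system are continuous up to
`t = 0`, satisfy the decay bounds with a function `M` continuous on `[0,T)`, and agree at
`t = 0`, then they coincide on `[0,T)`. -/
theorem uniqueness_threephase (T κA κB κS αS : ℝ) (hT : 0 < T)
    (hκA : 0 < κA) (hκB : 0 < κB) (hκS : 0 < κS) (hαS : 0 < αS)
    (θA₁ θB₁ θA₂ θB₂ : (ℝ × ℝ) × ℝ → ℝ → ℝ) (θS₁ θS₂ : ℝ × ℝ → ℝ → ℝ)
    (hsol₁ : ClassicalDecayingSolution T κA κB κS αS θA₁ θB₁ θS₁)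
    (hsol₂ : ClassicalDecayingSolution T κA κB κS αS θA₂ θB₂ θS₂)
    -- continuity up to time t = 0
    (hcA₁ : ContinuousOn (fun p : ((ℝ × ℝ) × ℝ) × ℝ => θA₁ p.1 p.2) (UA ×ˢ Set.Ico 0 T))
    (hcB₁ : ContinuousOn (fun p : ((ℝ × ℝ) × ℝ) × ℝ => θB₁ p.1 p.2) (UB ×ˢ Set.Ico 0 T))
    (hcS₁ : ContinuousOn (fun p : (ℝ × ℝ) × ℝ => θS₁ p.1 p.2) (Set.univ ×ˢ Set.Ico 0 T))
    (hcA₂ : ContinuousOn (fun p : ((ℝ × ℝ) × ℝ) × ℝ => θA₂ p.1 p.2) (UA ×ˢ Set.Ico 0 T))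
    (hcB₂ : ContinuousOn (fun p : ((ℝ × ℝ) × ℝ) × ℝ => θB₂ p.1 p.2) (UB ×ˢ Set.Ico 0 T))
    (hcS₂ : ContinuousOn (fun p : (ℝ × ℝ) × ℝ => θS₂ p.1 p.2) (Set.univ ×ˢ Set.Ico 0 T))
    -- decay bounds with a function M continuous on [0,T)
    (hdecay : ∃ M : ℝ → ℝ, ContinuousOn M (Set.Ico 0 T) ∧
      (∀ i : Fin 2, ∀ x ∈ UA, ∀ t ∈ Set.Ioo (0 : ℝ) T,
        |(if i = 0 then θA₁ else θA₂) x t| + |deriv ((if i = 0 then θA₁ else θA₂) x) t|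
          + ‖fderivWithin ℝ (fun y => (if i = 0 then θA₁ else θA₂) y t) UA x‖
          + ‖fderivWithin ℝ
              (fderivWithin ℝ (fun y => (if i = 0 then θA₁ else θA₂) y t) UA) UA x‖
          ≤ M t / (1 + ‖x‖) ^ 4) ∧
      (∀ i : Fin 2, ∀ x ∈ UB, ∀ t ∈ Set.Ioo (0 : ℝ) T,
        |(if i = 0 then θB₁ else θB₂) x t| + |deriv ((if i = 0 then θB₁ else θB₂) x) t|
          + ‖fderivWithin ℝ (fun y => (if i = 0 then θB₁ else θB₂) y t) UB x‖
          + ‖fderivWithin ℝ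
              (fderivWithin ℝ (fun y => (if i = 0 then θB₁ else θB₂) y t) UB) UB x‖
          ≤ M t / (1 + ‖x‖) ^ 4) ∧
      (∀ i : Fin 2, ∀ xh : ℝ × ℝ, ∀ t ∈ Set.Ioo (0 : ℝ) T,
        |(if i = 0 then θS₁ else θS₂) xh t| + |deriv ((if i = 0 then θS₁ else θS₂) xh) t|
          + ‖fderiv ℝ (fun y => (if i = 0 then θS₁ else θS₂) y t) xh‖
          + ‖fderiv ℝ (fderiv ℝ (fun y => (if i = 0 then θS₁ else θS₂) y t)) xh‖
          ≤ M t / (1 + ‖xh‖) ^ 4))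
    -- agreement at t = 0
    (hinitA : ∀ x ∈ UA, θA₁ x 0 = θA₂ x 0)
    (hinitB : ∀ x ∈ UB, θB₁ x 0 = θB₂ x 0)
    (hinitS : ∀ xh : ℝ × ℝ, θS₁ xh 0 = θS₂ xh 0) :
    (∀ x ∈ UA, ∀ t ∈ Set.Ico (0 : ℝ) T, θA₁ x t = θA₂ x t) ∧
    (∀ x ∈ UB, ∀ t ∈ Set.Ico (0 : ℝ) T, θB₁ x t = θB₂ x t) ∧
    (∀ xh : ℝ × ℝ, ∀ t ∈ Set.Ico (0 : ℝ) T, θS₁ xh t = θS₂ xh t) := by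
  obtain ⟨M, hMcont, hMA, hMB, hMS⟩ := hdecay
  have habsA : ∀ x ∈ UA, ∀ t ∈ Set.Ioo (0:ℝ) T,
      |θA₁ x t| ≤ M t / (1 + ‖x‖) ^ 4 ∧ |θA₂ x t| ≤ M t / (1 + ‖x‖) ^ 4 := by
    intro x hx t ht
    have h1 := hMA 0 x hx t ht
    have h2 := hMA 1 x hx t ht
    rw [if_pos rfl] at h1
    rw [if_neg (by decide : ¬(1:Fin 2) = 0)] at h2
    constructor
    · have n1 := abs_nonneg (deriv (θA₁ x) t)
      have n2 := norm_nonneg (fderivWithin ℝ (fun y => θA₁ y t) UA x)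
      have n3 := norm_nonneg (fderivWithin ℝ (fderivWithin ℝ (fun y => θA₁ y t) UA) UA x)
      linarith
    · have n1 := abs_nonneg (deriv (θA₂ x) t)
      have n2 := norm_nonneg (fderivWithin ℝ (fun y => θA₂ y t) UA x)
      have n3 := norm_nonneg (fderivWithin ℝ (fderivWithin ℝ (fun y => θA₂ y t) UA) UA x)
      linarith
  have habsB : ∀ x ∈ UB, ∀ t ∈ Set.Ioo (0:ℝ) T,
      |θB₁ x t| ≤ M t / (1 + ‖x‖) ^ 4 ∧ |θB₂ x t| ≤ M t / (1 + ‖x‖) ^ 4 := by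
    intro x hx t ht
    have h1 := hMB 0 x hx t ht
    have h2 := hMB 1 x hx t ht
    rw [if_pos rfl] at h1
    rw [if_neg (by decide : ¬(1:Fin 2) = 0)] at h2
    constructor
    · have n1 := abs_nonneg (deriv (θB₁ x) t)
      have n2 := norm_nonneg (fderivWithin ℝ (fun y => θB₁ y t) UB x)
      have n3 := norm_nonneg (fderivWithin ℝ (fderivWithin ℝ (fun y => θB₁ y t) UB) UB x)
      linarith
    · have n1 := abs_nonneg (deriv (θB₂ x) t)
      have n2 := norm_nonneg (fderivWithin ℝ (fun y => θB₂ y t) UB x)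
      have n3 := norm_nonneg (fderivWithin ℝ (fderivWithin ℝ (fun y => θB₂ y t) UB) UB x)
      linarith
  have hdec : ∃ M : ℝ → ℝ, ContinuousOn M (Set.Ico 0 T) ∧
      (∀ x ∈ UA, ∀ t ∈ Set.Ioo (0:ℝ) T,
        |θA₁ x t| ≤ M t / (1 + ‖x‖) ^ 4 ∧ |θA₂ x t| ≤ M t / (1 + ‖x‖) ^ 4) ∧
      (∀ x ∈ UB, ∀ t ∈ Set.Ioo (0:ℝ) T,
        |θB₁ x t| ≤ M t / (1 + ‖x‖) ^ 4 ∧ |θB₂ x t| ≤ M t / (1 + ‖x‖) ^ 4) :=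
    ⟨M, hMcont, habsA, habsB⟩
  have hdec' : ∃ M : ℝ → ℝ, ContinuousOn M (Set.Ico 0 T) ∧
      (∀ x ∈ UA, ∀ t ∈ Set.Ioo (0:ℝ) T,
        |θA₂ x t| ≤ M t / (1 + ‖x‖) ^ 4 ∧ |θA₁ x t| ≤ M t / (1 + ‖x‖) ^ 4) ∧
      (∀ x ∈ UB, ∀ t ∈ Set.Ioo (0:ℝ) T,
        |θB₂ x t| ≤ M t / (1 + ‖x‖) ^ 4 ∧ |θB₁ x t| ≤ M t / (1 + ‖x‖) ^ 4) :=
    ⟨M, hMcont, fun x hx t ht => ⟨(habsA x hx t ht).2, (habsA x hx t ht).1⟩,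
      fun x hx t ht => ⟨(habsB x hx t ht).2, (habsB x hx t ht).1⟩⟩
  have key₁ := key_le T κA κB κS αS hT hκA hκB hκS hαS θA₁ θB₁ θA₂ θB₂ θS₁ θS₂
    hsol₁ hsol₂ hcA₁ hcB₁ hcA₂ hcB₂ hdec hinitA hinitB
  have key₂ := key_le T κA κB κS αS hT hκA hκB hκS hαS θA₂ θB₂ θA₁ θB₁ θS₂ θS₁
    hsol₂ hsol₁ hcA₂ hcB₂ hcA₁ hcB₁ hdec'
    (fun x hx => (hinitA x hx).symm) (fun x hx => (hinitB x hx).symm)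
  refine ⟨?_, ?_, ?_⟩
  · intro x hx t ht
    rcases eq_or_lt_of_le ht.1 with h0 | h0
    · rw [← h0]; exact hinitA x hx
    · exact le_antisymm (key₁.1 x hx t ⟨h0, ht.2⟩) (key₂.1 x hx t ⟨h0, ht.2⟩)
  · intro x hx t ht
    rcases eq_or_lt_of_le ht.1 with h0 | h0
    · rw [← h0]; exact hinitB x hx
    · exact le_antisymm (key₁.2 x hx t ⟨h0, ht.2⟩) (key₂.2 x hx t ⟨h0, ht.2⟩)
  · intro xh t ht
    rcases eq_or_lt_of_le ht.1 with h0 | h0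
    · rw [← h0]; exact hinitS xh
    · have htT : t ∈ Set.Ioo (0:ℝ) T := ⟨h0, ht.2⟩
      have hmem : ((xh, (0:ℝ)) : (ℝ × ℝ) × ℝ) ∈ UA := mem_UA.mpr (le_refl 0)
      have e1 := le_antisymm (key₁.1 (xh, 0) hmem t htT) (key₂.1 (xh, 0) hmem t htT)
      rw [← hsol₁.interfaceA xh t htT, ← hsol₂.interfaceA xh t htT]
      exact e1


end
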